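/- Let P be a finite poset. For x ≤ y in P define μ(x,y) = Σ_i (−1)^i · rank_ℤ H̃^i(x,y), the alternating sum of the ranks of the reduced cohomology groups of the interval (so in particular μ(x,x) = 1). Then for every pair x < y in P, one has Σ_{x ≤ z ≤ y} μ(x,z) = 0. -/

import Mathlib

attribute [local instance] Classical.propDecidable

/-- A basis element of `C̃^{m-2}(x,z)`: a strictly increasing sequence
`x = w 0 < w 1 < ⋯ < w m = z` in `P`.  For `x < z` these correspond to the
`(m-2)`-dimensional faces of the nerve of the open interval `(x,z)` (including the
empty face for `m = 1`), and for `x = z` the only such sequence is the constant one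
with `m = 0`, giving the complex `ℤ` placed in degree `-2`. -/
abbrev IntervalChain {P : Type*} [PartialOrder P] (x z : P) (m : ℕ) : Type _ :=
  {w : Fin (m + 1) → P // StrictMono w ∧ w 0 = x ∧ w (Fin.last m) = z}

/-- The degree-`(m-2)` term of the reduced cochain complex `C̃^•(x,z)` of the open
interval `(x,z)` (with the convention that `C̃^•(x,x)` is `ℤ` in degree `-2`). -/
abbrev IntervalCochain {P : Type*} [PartialOrder P] (x z : P) (m : ℕ) : Type _ :=
  IntervalChain x z m →₀ ℤ

noncomputable instance {P : Type*} [PartialOrder P] [Fintype P] (x z : P) (m : ℕ) :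
    Fintype (IntervalChain x z m) :=
  Subtype.fintype _

/-- The differential `C̃^{m-2}(x,z) → C̃^{m-1}(x,z)`: the alternating sum over all ways
of inserting an element into the sequence, the sign being `(-1)^j` where `j` is the
(0-indexed) position of the new element in the resulting chain of the open interval
(i.e. not counting the initial entry `x`). -/
noncomputable def intervalCoboundary {P : Type*} [PartialOrder P] [Fintype P]
    (x z : P) (m : ℕ) :
    IntervalCochain x z m →ₗ[ℤ] IntervalCochain x z (m + 1) :=
  Finsupp.lsum ℤ fun c => LinearMap.toSpanSingleton ℤ (IntervalCochain x z (m + 1))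
    (∑ c' : IntervalChain x z (m + 1), ∑ j : Fin (m + 2),
      (if c'.val ∘ j.succAbove = c.val then ((-1 : ℤ)) ^ ((j : ℕ) - 1) else 0) •
        Finsupp.single c' 1)

/-- The image of the previous differential inside `C̃^{m-2}(x,z)` (zero for `m = 0`). -/
noncomputable def intervalPrevRange {P : Type*} [PartialOrder P] [Fintype P]
    (x z : P) : ∀ m : ℕ, Submodule ℤ (IntervalCochain x z m)
  | 0 => ⊥
  | (k + 1) => LinearMap.range (intervalCoboundary x z k)

/-- The reduced cohomology group `H̃^{m-2}(x,z)` of the interval, as the quotient of the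
kernel of the outgoing differential by (the pullback to the kernel of) the image of the
incoming differential. -/
noncomputable abbrev intervalCohomology {P : Type*} [PartialOrder P] [Fintype P]
    (x z : P) (m : ℕ) : Type _ :=
  ↥(LinearMap.ker (intervalCoboundary x z m)) ⧸
    Submodule.comap (LinearMap.ker (intervalCoboundary x z m)).subtype
      (intervalPrevRange x z m)

/-- `μ(x,z) = Σ_i (-1)^i rank_ℤ H̃^i(x,z)`, the alternating sum of the ranks of the reduced
cohomology groups of the interval (with `i = m - 2`, so the sign is `(-1)^m`); the groups
vanish for `m ≥ card P`, so the sum below is the full alternating sum. -/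
noncomputable def muEuler {P : Type*} [PartialOrder P] [Fintype P] (x z : P) : ℤ :=
  ∑ m ∈ Finset.range (Fintype.card P + 2),
    (-1 : ℤ) ^ m * (Module.finrank ℤ (intervalCohomology x z m) : ℤ)

lemma sa_exchange {n : ℕ} {i j : Fin (n+2)} (H : i ≤ j) (k : Fin (n+1)) :
    (j.succ).succAbove (i.succAbove k) = (i.castSucc).succAbove (j.succAbove k) := by
  rcases i with ⟨i, hi⟩; rcases j with ⟨j, hj⟩; rcases k with ⟨k, hk⟩
  simp only [Fin.succAbove, Fin.lt_def] at *
  split_ifs <;> simp_all [Fin.ext_iff, Fin.le_def, Fin.lt_def] <;> omega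

def ddInv (m : ℕ) : Fin (m+3) × Fin (m+2) → Fin (m+3) × Fin (m+2) := fun p =>
  if h : (p.2 : ℕ) < (p.1 : ℕ) then
    (p.2.castSucc, p.1.pred (by intro he; rw [he] at h; simp at h))
  else
    (p.2.succ, p.1.castPred (by intro he; rw [he] at h; simp [Fin.last] at h; try omega))

lemma ddInv_pos {m : ℕ} (a : Fin (m+3)) (b : Fin (m+2)) (h : (b : ℕ) < (a : ℕ)) :
    ddInv m (a, b) = (b.castSucc, a.pred (by intro he; rw [he] at h; simp at h)) := by
  simp only [ddInv]; rw [dif_pos h]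

lemma ddInv_neg {m : ℕ} (a : Fin (m+3)) (b : Fin (m+2)) (h : ¬ (b : ℕ) < (a : ℕ)) :
    ddInv m (a, b) = (b.succ, a.castPred (by intro he; rw [he] at h; simp [Fin.last] at h; try omega)) := by
  simp only [ddInv]; rw [dif_neg h]

lemma ddInv_invol (m : ℕ) (p : Fin (m+3) × Fin (m+2)) : ddInv m (ddInv m p) = p := by
  rcases p with ⟨a, b⟩
  by_cases h : (b : ℕ) < (a : ℕ)
  · rw [ddInv_pos a b h, ddInv_neg _ _ (by simp [Fin.coe_pred]; omega)]
    simp [Fin.succ_pred, Fin.castPred_castSucc]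
  · rw [ddInv_neg a b h, ddInv_pos _ _ (by simp [Fin.coe_castPred]; omega)]
    simp [Fin.castSucc_castPred, Fin.pred_succ]

lemma ddInv_comp (m : ℕ) (p : Fin (m+3) × Fin (m+2)) :
    ((ddInv m p).1).succAbove ∘ ((ddInv m p).2).succAbove =
      (p.1).succAbove ∘ (p.2).succAbove := by
  rcases p with ⟨a, b⟩
  by_cases h : (b : ℕ) < (a : ℕ)
  · rw [ddInv_pos a b h]
    funext k
    have H : b ≤ a.pred (by intro he; rw [he] at h; simp at h) := by
      simp only [Fin.le_def, Fin.coe_pred]; omega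
    have := (sa_exchange H k).symm
    rwa [Fin.succ_pred] at this
  · rw [ddInv_neg a b h]
    funext k
    have hal : a ≠ Fin.last (m+2) := by intro he; rw [he] at h; simp [Fin.last] at h; try omega
    have H : a.castPred hal ≤ b := by
      simp only [Fin.le_def, Fin.coe_castPred]; omega
    have := sa_exchange H k
    rwa [Fin.castSucc_castPred] at this

lemma ddInv_ne (m : ℕ) (p : Fin (m+3) × Fin (m+2)) : ddInv m p ≠ p := by
  rcases p with ⟨a, b⟩
  by_cases h : (b : ℕ) < (a : ℕ)
  · rw [ddInv_pos a b h]
    intro he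
    have := congrArg (fun q => (q.1 : ℕ)) he
    simp at this; omega
  · rw [ddInv_neg a b h]
    intro he
    have := congrArg (fun q => (q.1 : ℕ)) he
    simp at this; omega

lemma sum_subtype_eq {α : Type*} {pr : α → Prop} [Fintype {a : α // pr a}] (g : α) (t : {a : α // pr a} → ℤ) :
    (∑ a : {a // pr a}, if g = a.val then t a else 0) = if h : pr g then t ⟨g, h⟩ else 0 := by
  split_ifs with h
  · rw [Finset.sum_eq_single (⟨g, h⟩ : {a // pr a})]
    · simp
    · rintro b _ hb
      rw [if_neg]
      rintro rfl
      exact hb (by ext; rfl)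
    · intro habs; exact absurd (Finset.mem_univ _) habs
  · apply Finset.sum_eq_zero
    rintro a _
    rw [if_neg]
    rintro rfl
    exact h a.2


section Aux
variable {P : Type*} [PartialOrder P] [Fintype P] (x z : P)

noncomputable def cb {m : ℕ} (c' : IntervalChain x z (m+1)) (c : IntervalChain x z m) : ℤ :=
  ∑ j : Fin (m + 2), if c'.val ∘ j.succAbove = c.val then ((-1 : ℤ)) ^ ((j : ℕ) - 1) else 0

lemma coboundary_single {m : ℕ} (c : IntervalChain x z m) :
    intervalCoboundary x z m (Finsupp.single c 1) =
      ∑ c' : IntervalChain x z (m+1), cb x z c' c • Finsupp.single c' 1 := by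
  rw [intervalCoboundary, Finsupp.lsum_single]
  simp only [LinearMap.toSpanSingleton_apply, one_smul, cb, Finset.sum_smul, ite_smul, zero_smul]


section DD
variable {m : ℕ} (c'' : IntervalChain x z (m+2)) (c : IntervalChain x z m)

lemma cond_bounds {a : Fin (m+3)} {b : Fin (m+2)}
    (h : c''.val ∘ a.succAbove ∘ b.succAbove = c.val) :
    a ≠ 0 ∧ b ≠ 0 ∧ a ≠ Fin.last (m+2) ∧ b ≠ Fin.last (m+1) := by
  have inj := c''.2.1.injective
  have h0 : a.succAbove (b.succAbove 0) = 0 := by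
    apply inj
    have := congrFun h 0
    simp only [Function.comp_apply] at this
    rw [this, c.2.2.1, c''.2.2.1]
  have hl : a.succAbove (b.succAbove (Fin.last m)) = Fin.last (m+2) := by
    apply inj
    have := congrFun h (Fin.last m)
    simp only [Function.comp_apply] at this
    rw [this, c.2.2.2, c''.2.2.2]
  have ha0 : a ≠ 0 := by
    rintro rfl
    rw [Fin.succAbove_zero] at h0
    exact Fin.succ_ne_zero _ h0
  have hb0 : b ≠ 0 := by
    have := (Fin.succAbove_eq_zero_iff ha0).mp h0
    rintro rfl
    rw [Fin.succAbove_zero] at this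
    exact Fin.succ_ne_zero _ this
  have hal : a ≠ Fin.last (m+2) := by
    rintro rfl
    rw [Fin.succAbove_last] at hl
    exact absurd (congrArg Fin.val hl) (by simp [Fin.castSucc, Fin.last]; omega)
  have hbl : b ≠ Fin.last (m+1) := by
    have := (Fin.succAbove_eq_last_iff hal).mp hl
    rintro rfl
    rw [Fin.succAbove_last] at this
    exact absurd (congrArg Fin.val this) (by simp [Fin.castSucc, Fin.last])
  exact ⟨ha0, hb0, hal, hbl⟩

lemma mid_chain {a : Fin (m+3)} {b : Fin (m+2)}
    (h : c''.val ∘ a.succAbove ∘ b.succAbove = c.val) :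
    StrictMono (c''.val ∘ a.succAbove) ∧ (c''.val ∘ a.succAbove) 0 = x ∧
      (c''.val ∘ a.succAbove) (Fin.last (m+1)) = z := by
  obtain ⟨ha0, _, hal, _⟩ := cond_bounds x z c'' c h
  refine ⟨c''.2.1.comp (Fin.strictMono_succAbove a), ?_, ?_⟩
  · simp only [Function.comp_apply, Fin.succAbove_ne_zero_zero ha0, c''.2.2.1]
  · simp only [Function.comp_apply, Fin.succAbove_ne_last_last hal, c''.2.2.2]

lemma cb_mul_sum : (∑ c' : IntervalChain x z (m+1), cb x z c'' c' * cb x z c' c) = 0 := by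
  -- expand and swap
  have step1 : (∑ c' : IntervalChain x z (m+1), cb x z c'' c' * cb x z c' c) =
      ∑ a : Fin (m+3), ∑ b : Fin (m+2), ∑ c' : IntervalChain x z (m+1),
        (if c''.val ∘ a.succAbove = c'.val then
          (if c'.val ∘ b.succAbove = c.val then
            ((-1:ℤ)) ^ ((a : ℕ) - 1) * ((-1:ℤ)) ^ ((b : ℕ) - 1) else 0) else 0) := by
    have e1 : (∑ c' : IntervalChain x z (m+1), cb x z c'' c' * cb x z c' c) =
        ∑ c' : IntervalChain x z (m+1), ∑ a : Fin (m+3), ∑ b : Fin (m+2),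
          (if c''.val ∘ a.succAbove = c'.val then ((-1:ℤ)) ^ ((a : ℕ) - 1) else 0) *
          (if c'.val ∘ b.succAbove = c.val then ((-1:ℤ)) ^ ((b : ℕ) - 1) else 0) := by
      refine Finset.sum_congr rfl fun c' _ => ?_
      rw [cb, cb, Finset.sum_mul]
      exact Finset.sum_congr rfl fun a _ => Finset.mul_sum _ _ _
    rw [e1, Finset.sum_comm]
    refine Finset.sum_congr rfl fun a _ => ?_
    rw [Finset.sum_comm]
    refine Finset.sum_congr rfl fun b _ => Finset.sum_congr rfl fun c' _ => ?_
    split_ifs <;> ring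
  rw [step1]
  have step2 : ∀ (a : Fin (m+3)) (b : Fin (m+2)),
      (∑ c' : IntervalChain x z (m+1),
        (if c''.val ∘ a.succAbove = c'.val then
          (if c'.val ∘ b.succAbove = c.val then
            ((-1:ℤ)) ^ ((a : ℕ) - 1) * ((-1:ℤ)) ^ ((b : ℕ) - 1) else 0) else 0)) =
      (if c''.val ∘ a.succAbove ∘ b.succAbove = c.val then
          ((-1:ℤ)) ^ ((a : ℕ) - 1) * ((-1:ℤ)) ^ ((b : ℕ) - 1) else 0) := by
    intro a b
    by_cases hc : c''.val ∘ a.succAbove ∘ b.succAbove = c.val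
    · have hch := mid_chain x z c'' c hc
      rw [if_pos hc, Finset.sum_eq_single (⟨c''.val ∘ a.succAbove, hch⟩ : IntervalChain x z (m+1))]
      · rw [if_pos rfl]; exact if_pos hc
      · intro b' _ hb'
        rw [if_neg]
        intro he
        exact hb' (Subtype.ext he.symm)
      · intro h; exact absurd (Finset.mem_univ _) h
    · rw [if_neg hc]
      apply Finset.sum_eq_zero
      intro c' _
      by_cases h1 : c''.val ∘ a.succAbove = c'.val
      · rw [if_pos h1, if_neg]
        intro h2
        rw [← h1] at h2
        exact hc h2
      · rw [if_neg h1]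
  simp only [step2]
  rw [← Finset.sum_product']
  apply Finset.sum_ninvolution (ddInv m)
  · intro p
    rcases p with ⟨a, b⟩
    by_cases hc : c''.val ∘ a.succAbove ∘ b.succAbove = c.val
    · obtain ⟨ha0, hb0, _, _⟩ := cond_bounds x z c'' c hc
      have ha1 : 1 ≤ (a : ℕ) := by
        rcases Nat.eq_zero_or_pos (a : ℕ) with h | h
        · exact absurd (Fin.ext h) ha0
        · exact h
      have hb1 : 1 ≤ (b : ℕ) := by
        rcases Nat.eq_zero_or_pos (b : ℕ) with h | h
        · exact absurd (Fin.ext h) hb0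
        · exact h
      have hcomp := ddInv_comp m (a, b)
      have hc' : c''.val ∘ ((ddInv m (a,b)).1).succAbove ∘ ((ddInv m (a,b)).2).succAbove = c.val := by
        rw [show ((ddInv m (a,b)).1).succAbove ∘ ((ddInv m (a,b)).2).succAbove
            = a.succAbove ∘ b.succAbove from hcomp]
        exact hc
      rw [if_pos hc, if_pos hc']
      by_cases h : (b : ℕ) < (a : ℕ)
      · rw [ddInv_pos a b h]
        simp only [Fin.coe_castSucc, Fin.coe_pred]
        rw [← pow_add, ← pow_add]
        have he : (a : ℕ) - 1 + ((b : ℕ) - 1) = ((b:ℕ) - 1 + ((a:ℕ) - 1 - 1)) + 1 := by omega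
        rw [he, pow_succ]
        ring
      · rw [ddInv_neg a b h]
        simp only [Fin.val_succ, Fin.coe_castPred]
        rw [← pow_add, ← pow_add]
        have he : (b : ℕ) + 1 - 1 + ((a:ℕ) - 1) = ((a : ℕ) - 1 + ((b : ℕ) - 1)) + 1 := by omega
        rw [he, pow_succ]
        ring
    · have hcomp := ddInv_comp m (a, b)
      have hc' : ¬ (c''.val ∘ ((ddInv m (a,b)).1).succAbove ∘ ((ddInv m (a,b)).2).succAbove = c.val) := by
        rw [show ((ddInv m (a,b)).1).succAbove ∘ ((ddInv m (a,b)).2).succAbove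
            = a.succAbove ∘ b.succAbove from hcomp]
        exact hc
      rw [if_neg hc, if_neg hc']
      ring
  · intro p _
    exact ddInv_ne m p
  · intro p; exact Finset.mem_univ _
  · intro p; exact ddInv_invol m p
end DD


lemma coboundary_sq {m : ℕ} (f : IntervalCochain x z m) :
    intervalCoboundary x z (m+1) (intervalCoboundary x z m f) = 0 := by
  induction f using Finsupp.induction_linear with
  | zero => simp
  | add f g hf hg => rw [map_add, map_add, hf, hg, add_zero]
  | single c n =>
    have h1 : (Finsupp.single c n : IntervalCochain x z m) = n • Finsupp.single c 1 := by
      rw [Finsupp.smul_single, smul_eq_mul, mul_one]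
    rw [h1, map_smul, map_smul]
    rw [coboundary_single]
    rw [map_sum]
    have h2 : ∀ c' : IntervalChain x z (m+1),
        intervalCoboundary x z (m+1) (cb x z c' c • Finsupp.single c' 1) =
        ∑ c'' : IntervalChain x z (m+2), (cb x z c'' c' * cb x z c' c) • Finsupp.single c'' 1 := by
      intro c'
      rw [map_smul, coboundary_single, Finset.smul_sum]
      refine Finset.sum_congr rfl fun c'' _ => ?_
      rw [smul_smul, mul_comm]
    rw [Finset.sum_congr rfl fun c' _ => h2 c']
    rw [Finset.sum_comm]
    have h3 : ∀ c'' : IntervalChain x z (m+2),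
        (∑ c' : IntervalChain x z (m+1), (cb x z c'' c' * cb x z c' c) • Finsupp.single c'' (1:ℤ))
          = 0 := by
      intro c''
      rw [← Finset.sum_smul, cb_mul_sum, zero_smul]
    rw [Finset.sum_congr rfl fun c'' _ => h3 c'', Finset.sum_const_zero, smul_zero]

lemma prevRange_le_ker (m : ℕ) :
    intervalPrevRange x z m ≤ LinearMap.ker (intervalCoboundary x z m) := by
  cases m with
  | zero => exact bot_le
  | succ k =>
    rintro f ⟨g, rfl⟩
    exact coboundary_sq x z g

lemma chain_isEmpty {m : ℕ} (h : Fintype.card P ≤ m) : IsEmpty (IntervalChain x z m) := by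
  constructor
  intro w
  have := Fintype.card_le_of_injective w.val w.2.1.injective
  rw [Fintype.card_fin] at this
  omega

lemma euler_eq : muEuler x z =
    ∑ m ∈ Finset.range (Fintype.card P + 2),
      (-1 : ℤ) ^ m * (Fintype.card (IntervalChain x z m) : ℤ) := by
  classical
  have h1 : ∀ m, Module.finrank ℤ (intervalCohomology x z m)
      + Module.finrank ℤ (intervalPrevRange x z m)
      = Module.finrank ℤ (LinearMap.ker (intervalCoboundary x z m)) := by
    intro m
    have hle := prevRange_le_ker x z m
    have e1 := Submodule.finrank_quotient_add_finrank
      (Submodule.comap (LinearMap.ker (intervalCoboundary x z m)).subtype (intervalPrevRange x z m))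
    have e2 : Module.finrank ℤ
        (Submodule.comap (LinearMap.ker (intervalCoboundary x z m)).subtype (intervalPrevRange x z m))
        = Module.finrank ℤ (intervalPrevRange x z m) :=
      LinearEquiv.finrank_eq (Submodule.comapSubtypeEquivOfLe hle)
    rw [e2] at e1
    exact e1
  have h2 : ∀ m, Module.finrank ℤ (LinearMap.ker (intervalCoboundary x z m))
      + Module.finrank ℤ (intervalPrevRange x z (m+1))
      = Fintype.card (IntervalChain x z m) := by
    intro m
    have e1 := Submodule.finrank_quotient_add_finrank (LinearMap.ker (intervalCoboundary x z m))
    have e2 : Module.finrank ℤ (IntervalCochain x z m ⧸ LinearMap.ker (intervalCoboundary x z m))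
        = Module.finrank ℤ (intervalPrevRange x z (m+1)) := by
      have := LinearEquiv.finrank_eq ((intervalCoboundary x z m).quotKerEquivRange)
      rw [this]
      rfl
    have e3 : Module.finrank ℤ (IntervalCochain x z m) = Fintype.card (IntervalChain x z m) :=
      Module.finrank_finsupp_self ℤ
    rw [e2, e3] at e1
    omega
  have h3 : Module.finrank ℤ (intervalPrevRange x z 0) = 0 := by
    simp only [intervalPrevRange]
    exact finrank_bot ℤ _
  have h4 : Module.finrank ℤ (intervalPrevRange x z (Fintype.card P + 2)) = 0 := by
    have he : IsEmpty (IntervalChain x z (Fintype.card P + 2)) := chain_isEmpty x z (by omega)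
    have : Subsingleton (IntervalCochain x z (Fintype.card P + 2)) := by
      constructor
      intro f g
      ext a
      exact isEmptyElim a
    have hz : Module.finrank ℤ (IntervalCochain x z (Fintype.card P + 2)) = 0 :=
      Module.finrank_zero_of_subsingleton
    have hle := Submodule.finrank_le (intervalPrevRange x z (Fintype.card P + 2))
    rw [hz] at hle
    omega
  have tele : ∀ (g : ℕ → ℤ) (M : ℕ),
      (∑ m ∈ Finset.range M, (-1:ℤ)^m * (g m + g (m+1))) = g 0 + (-1:ℤ)^(M+1) * g M := by
    intro g M
    induction M with
    | zero => simp
    | succ M ih =>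
      rw [Finset.sum_range_succ, ih]
      rw [pow_succ, pow_succ]
      ring
  have key : ∀ m, ((Module.finrank ℤ (intervalCohomology x z m)) : ℤ)
      = (Fintype.card (IntervalChain x z m) : ℤ)
        - (((Module.finrank ℤ (intervalPrevRange x z m)) : ℤ)
           + ((Module.finrank ℤ (intervalPrevRange x z (m+1))) : ℤ)) := by
    intro m
    have a1 := h1 m
    have a2 := h2 m
    omega
  rw [muEuler]
  have hmain : (∑ m ∈ Finset.range (Fintype.card P + 2),
      (-1 : ℤ) ^ m * (Module.finrank ℤ (intervalCohomology x z m) : ℤ)) =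
      (∑ m ∈ Finset.range (Fintype.card P + 2),
        (-1 : ℤ) ^ m * (Fintype.card (IntervalChain x z m) : ℤ))
      - (∑ m ∈ Finset.range (Fintype.card P + 2), (-1 : ℤ) ^ m *
          (((Module.finrank ℤ (intervalPrevRange x z m)) : ℤ)
           + ((Module.finrank ℤ (intervalPrevRange x z (m+1))) : ℤ))) := by
    rw [← Finset.sum_sub_distrib]
    refine Finset.sum_congr rfl fun m _ => ?_
    rw [key m]
    ring
  rw [hmain, tele (fun m => ((Module.finrank ℤ (intervalPrevRange x z m)) : ℤ)) (Fintype.card P + 2)]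
  simp only [h3, h4]
  simp

end Aux

section Aux2
variable {P : Type*} [PartialOrder P] [Fintype P] (x y : P)

/-- chains starting at x with top ≤ y -/
abbrev TChain (m : ℕ) : Type _ :=
  {w : Fin (m + 1) → P // StrictMono w ∧ w 0 = x ∧ w (Fin.last m) ≤ y}
/-- chains starting at x with top < y -/
abbrev BChain (m : ℕ) : Type _ :=
  {w : Fin (m + 1) → P // StrictMono w ∧ w 0 = x ∧ w (Fin.last m) < y}

noncomputable instance (m : ℕ) : Fintype (TChain x y m) := Subtype.fintype _
noncomputable instance (m : ℕ) : Fintype (BChain x y m) := Subtype.fintype _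

lemma sum_card_eq (m : ℕ) :
    (∑ z : {z : P // x ≤ z ∧ z ≤ y}, Fintype.card (IntervalChain x z.val m))
      = Fintype.card (TChain x y m) := by
  classical
  let f : TChain x y m → {z : P // x ≤ z ∧ z ≤ y} := fun w =>
    ⟨w.val (Fin.last m),
      ⟨le_trans (le_of_eq w.2.2.1.symm) (w.2.1.monotone (Fin.zero_le _)), w.2.2.2⟩⟩
  have e2 : ∀ zz : {z : P // x ≤ z ∧ z ≤ y},
      Fintype.card {w : TChain x y m // f w = zz} = Fintype.card (IntervalChain x zz.val m) := by
    intro zz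
    apply Fintype.card_congr
    exact
      { toFun := fun u => ⟨u.val.val, u.val.2.1, u.val.2.2.1, congrArg Subtype.val u.2⟩
        invFun := fun c => ⟨⟨c.val, c.2.1, c.2.2.1, by rw [c.2.2.2]; exact zz.2.2⟩,
          Subtype.ext c.2.2.2⟩
        left_inv := fun u => Subtype.ext (Subtype.ext rfl)
        right_inv := fun c => Subtype.ext rfl }
  calc (∑ z : {z : P // x ≤ z ∧ z ≤ y}, Fintype.card (IntervalChain x z.val m))
      = ∑ zz : {z : P // x ≤ z ∧ z ≤ y}, Fintype.card {w : TChain x y m // f w = zz} := by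
        exact Finset.sum_congr rfl fun zz _ => (e2 zz).symm
    _ = Fintype.card (Σ zz : {z : P // x ≤ z ∧ z ≤ y}, {w : TChain x y m // f w = zz}) := by
        rw [Fintype.card_sigma]
    _ = Fintype.card (TChain x y m) := Fintype.card_congr (Equiv.sigmaFiberEquiv f)

lemma tchain_card_split (m : ℕ) (hxy : x < y) :
    Fintype.card (TChain x y m)
      = Fintype.card (IntervalChain x y m) + Fintype.card (BChain x y m) := by
  classical
  have key : ∀ w : Fin (m+1) → P,
      (StrictMono w ∧ w 0 = x ∧ w (Fin.last m) ≤ y) ↔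
      ((StrictMono w ∧ w 0 = x ∧ w (Fin.last m) = y) ∨
       (StrictMono w ∧ w 0 = x ∧ w (Fin.last m) < y)) := by
    intro w
    constructor
    · rintro ⟨h1, h2, h3⟩
      rcases lt_or_eq_of_le h3 with h | h
      · exact Or.inr ⟨h1, h2, h⟩
      · exact Or.inl ⟨h1, h2, h⟩
    · rintro (⟨h1, h2, h3⟩ | ⟨h1, h2, h3⟩)
      · exact ⟨h1, h2, le_of_eq h3⟩
      · exact ⟨h1, h2, le_of_lt h3⟩
  rw [Fintype.card_congr (Equiv.subtypeEquivRight key)]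
  apply Fintype.card_subtype_or_disjoint
  intro p' hp1 hp2
  intro w hw
  have h1 := (hp1 w hw).2.2
  have h2 := (hp2 w hw).2.2
  rw [h1] at h2
  exact absurd h2 (lt_irrefl y)

noncomputable def bchain_equiv (m : ℕ) : BChain x y m ≃ IntervalChain x y (m+1) := by
  classical
  refine
    { toFun := fun w => ⟨Fin.snoc w.val y, ?_, ?_, ?_⟩
      invFun := fun c => ⟨c.val ∘ Fin.castSucc, c.2.1.comp Fin.strictMono_castSucc, ?_, ?_⟩
      left_inv := ?_
      right_inv := ?_ }
  · -- strict mono of snoc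
    rw [Fin.strictMono_iff_lt_succ]
    intro i
    refine Fin.lastCases ?_ ?_ i
    · rw [Fin.succ_last, Fin.snoc_last, Fin.snoc_castSucc]
      exact w.2.2.2
    · intro j
      rw [Fin.succ_castSucc, Fin.snoc_castSucc, Fin.snoc_castSucc]
      exact w.2.1 (Fin.castSucc_lt_succ : Fin.castSucc j < j.succ)
  · rw [show (0 : Fin (m+2)) = Fin.castSucc 0 by rfl, Fin.snoc_castSucc]
    exact w.2.2.1
  · rw [Fin.snoc_last]
  · show c.val (Fin.castSucc 0) = x
    rw [show Fin.castSucc (0 : Fin (m+1)) = 0 by rfl]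
    exact c.2.2.1
  · show c.val (Fin.castSucc (Fin.last m)) < y
    exact lt_of_lt_of_eq (c.2.1 (Fin.castSucc_lt_last _)) c.2.2.2
  · intro w
    apply Subtype.ext
    funext i
    show (Fin.snoc w.val y : Fin (m+2) → P) (Fin.castSucc i) = w.val i
    rw [Fin.snoc_castSucc]
  · intro c
    apply Subtype.ext
    funext i
    show (Fin.snoc (c.val ∘ Fin.castSucc) y : Fin (m+2) → P) i = c.val i
    refine Fin.lastCases ?_ ?_ i
    · rw [Fin.snoc_last]
      exact c.2.2.2.symm
    · intro j
      rw [Fin.snoc_castSucc]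
      rfl

lemma intervalChain_zero_empty (hxy : x ≠ y) : Fintype.card (IntervalChain x y 0) = 0 := by
  rw [Fintype.card_eq_zero_iff]
  constructor
  intro w
  exact hxy ((w.2.2.1.symm.trans
    (congrArg w.val (Subsingleton.elim (0 : Fin 1) (Fin.last 0)))).trans w.2.2.2)

lemma bchain_empty {m : ℕ} (h : Fintype.card P ≤ m) : Fintype.card (BChain x y m) = 0 := by
  rw [Fintype.card_eq_zero_iff]
  constructor
  intro w
  have := Fintype.card_le_of_injective w.val w.2.1.injective
  rw [Fintype.card_fin] at this
  omega

lemma comb_sum_zero (hxy : x < y) :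
    (∑ m ∈ Finset.range (Fintype.card P + 2),
      (-1 : ℤ) ^ m * (Fintype.card (TChain x y m) : ℤ)) = 0 := by
  classical
  have hA : ∀ m, Fintype.card (IntervalChain x y (m+1)) = Fintype.card (BChain x y m) :=
    fun m => (Fintype.card_congr (bchain_equiv x y m)).symm
  simp only [fun m => tchain_card_split x y m hxy]
  have expand : ∀ m, ((Fintype.card (IntervalChain x y m) + Fintype.card (BChain x y m) : ℕ) : ℤ)
      = (Fintype.card (IntervalChain x y m) : ℤ) + (Fintype.card (BChain x y m) : ℤ) := by
    intro m; push_cast; ring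
  simp only [expand]
  simp only [mul_add, Finset.sum_add_distrib]
  have e1 : (∑ m ∈ Finset.range (Fintype.card P + 2),
      (-1:ℤ)^m * (Fintype.card (IntervalChain x y m) : ℤ))
      = - ∑ m ∈ Finset.range (Fintype.card P + 1),
          (-1:ℤ)^m * (Fintype.card (BChain x y m) : ℤ) := by
    rw [Finset.sum_range_succ']
    simp only [intervalChain_zero_empty x y (ne_of_lt hxy), Nat.cast_zero, mul_zero, add_zero]
    rw [← Finset.sum_neg_distrib]
    refine Finset.sum_congr rfl fun m _ => ?_
    rw [hA m, pow_succ]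
    ring
  have e2 : (∑ m ∈ Finset.range (Fintype.card P + 2),
      (-1:ℤ)^m * (Fintype.card (BChain x y m) : ℤ))
      = ∑ m ∈ Finset.range (Fintype.card P + 1),
          (-1:ℤ)^m * (Fintype.card (BChain x y m) : ℤ) := by
    rw [Finset.sum_range_succ]
    rw [bchain_empty x y (by omega)]
    simp
  rw [e1, e2]
  ring

end Aux2

/-- Let `P` be a finite poset.  For `x ≤ y` define
`μ(x,y) = Σ_i (-1)^i rank_ℤ H̃^i(x,y)` (so in particular `μ(x,x) = 1`).  Then for every
pair `x < y` in `P` one has `Σ_{x ≤ z ≤ y} μ(x,z) = 0`. -/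
theorem sum_muEuler_eq_zero {P : Type*} [PartialOrder P] [Fintype P]
    (x y : P) (hxy : x < y) :
    ∑ z : {z : P // x ≤ z ∧ z ≤ y}, muEuler x z.val = 0 := by
  classical
  have step1 : (∑ z : {z : P // x ≤ z ∧ z ≤ y}, muEuler x z.val)
      = ∑ z : {z : P // x ≤ z ∧ z ≤ y}, ∑ m ∈ Finset.range (Fintype.card P + 2),
          (-1 : ℤ) ^ m * (Fintype.card (IntervalChain x z.val m) : ℤ) :=
    Finset.sum_congr rfl fun z _ => euler_eq x z.val
  rw [step1, Finset.sum_comm]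
  have step2 : ∀ m ∈ Finset.range (Fintype.card P + 2),
      (∑ z : {z : P // x ≤ z ∧ z ≤ y},
        (-1 : ℤ) ^ m * (Fintype.card (IntervalChain x z.val m) : ℤ))
      = (-1 : ℤ) ^ m * (Fintype.card (TChain x y m) : ℤ) := by
    intro m _
    rw [← Finset.mul_sum]
    congr 1
    rw [← Nat.cast_sum]
    exact_mod_cast congrArg (Nat.cast : ℕ → ℤ) (sum_card_eq x y m)
  rw [Finset.sum_congr rfl step2]
  exact comb_sum_zero x y hxy
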